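/- Let R be a commutative ring whose additive group is torsion-free (N·c = 0 with N a nonzero integer and c ∈ R implies c = 0), let r be a positive integer, and let L be a unit of R such that L^i − 1 is a unit of R for every positive integer i. Let S ⊆ ℕ^r × ℤ^r be a finite set and let c_{a,b} ∈ R for each (a,b) ∈ S. If Σ_{(a,b)∈S} c_{a,b} · n^a · L^{b·n} = 0 for every n ∈ ℕ^r, where n^a = n_1^{a_1}⋯n_r^{a_r} and b·n = b_1 n_1 + ⋯ + b_r n_r, then c_{a,b} = 0 for every (a,b) ∈ S. -/

import Mathlib

open Polynomial Matrix Finset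


/-- A polynomial over a torsion-free ring vanishing at all naturals is zero. -/
theorem polyA {R : Type*} [CommRing R]
    (htf : ∀ (N : ℤ) (x : R), N ≠ 0 → N • x = 0 → x = 0)
    (p : R[X]) (hp : ∀ n : ℕ, p.eval (n : R) = 0) : p = 0 := by
  set d := p.natDegree with hd
  set v : Fin (d+1) → R := fun i => p.coeff i with hv
  set M : Matrix (Fin (d+1)) (Fin (d+1)) R := vandermonde (fun i => ((i : ℕ) : R)) with hM
  have hMv : M.mulVec v = 0 := by
    funext i
    simp only [mulVec, dotProduct, hM, vandermonde, of_apply, hv]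
    rw [show (0 : Fin (d+1) → R) i = 0 from rfl]
    have := hp i
    rw [Polynomial.eval_eq_sum_range] at this
    rw [← this]
    rw [Fin.sum_univ_eq_sum_range (fun j => ((i:ℕ):R)^(j:ℕ) * p.coeff j)]
    exact Finset.sum_congr rfl fun j _ => mul_comm _ _
  have key : (M.det) • v = 0 := by
    have := congrArg (fun w => (M.adjugate).mulVec w) hMv
    simpa [Matrix.mulVec_mulVec, Matrix.adjugate_mul, Matrix.smul_mulVec,
      Matrix.one_mulVec] using this
  have hdet : M.det = ((∏ i : Fin (d+1), ∏ j ∈ Finset.Ioi i, ((j:ℤ) - (i:ℤ)) : ℤ) : R) := by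
    rw [hM, Matrix.det_vandermonde]
    push_cast
    rfl
  have hN : (∏ i : Fin (d+1), ∏ j ∈ Finset.Ioi i, ((j:ℤ) - (i:ℤ)) : ℤ) ≠ 0 := by
    apply Finset.prod_ne_zero_iff.2
    intro i _
    apply Finset.prod_ne_zero_iff.2
    intro j hj
    have : (i:ℤ) < (j:ℤ) := by exact_mod_cast Fin.lt_iff_val_lt_val.mp (Finset.mem_Ioi.mp hj)
    omega
  have hcoeff : ∀ k : Fin (d+1), p.coeff k = 0 := by
    intro k
    apply htf _ _ hN
    have := congrFun key k
    simpa [zsmul_eq_mul, hdet, hv] using this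
  ext k
  rcases le_or_gt k d with h | h
  · simpa using hcoeff ⟨k, by omega⟩
  · simp [Polynomial.coeff_eq_zero_of_natDegree_lt (by omega : p.natDegree < k)]


theorem taylorCoeffTop {R : Type*} [CommRing R] (p : R[X]) (n : ℕ) (h : p.natDegree ≤ n) :
    (taylor 1 p).coeff n = p.coeff n := by
  rw [taylor_coeff]
  have h0 : Polynomial.hasseDeriv n p = C (p.coeff n) := by
    ext m
    rw [Polynomial.hasseDeriv_coeff, Polynomial.coeff_C]
    rcases Nat.eq_zero_or_pos m with hm | hm
    · subst hm; simp
    · have : p.coeff (m + n) = 0 :=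
        Polynomial.coeff_eq_zero_of_natDegree_lt (by omega)
      simp [this, hm, Nat.pos_iff_ne_zero.mp hm]
  rw [h0, eval_C]

theorem deltaDeg {R : Type*} [CommRing R] (p : R[X]) (d : ℕ) (h : p.natDegree ≤ d + 1) :
    (taylor 1 p - p).natDegree ≤ d := by
  apply Polynomial.natDegree_le_iff_coeff_eq_zero.2
  intro m hm
  rw [Polynomial.coeff_sub]
  rcases eq_or_lt_of_le (Nat.succ_le_of_lt hm) with hm1 | hm1
  · rw [taylorCoeffTop p m (by omega), sub_self]
  · have h1 : p.coeff m = 0 := Polynomial.coeff_eq_zero_of_natDegree_lt (by omega)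
    have h2 : (taylor 1 p).coeff m = 0 :=
      Polynomial.coeff_eq_zero_of_natDegree_lt (by rw [natDegree_taylor]; omega)
    rw [h1, h2, sub_self]

theorem deltaNilp {R : Type*} [CommRing R] :
    ∀ d : ℕ, ∀ p : R[X], p.natDegree ≤ d →
      (fun q : R[X] => taylor 1 q - q)^[d + 1] p = 0 := by
  intro d
  induction d with
  | zero =>
    intro p hp
    rw [Polynomial.eq_C_of_natDegree_le_zero hp]
    simp [Polynomial.taylor_C]
  | succ d ih =>
    intro p hp
    rw [Function.iterate_succ_apply]
    exact ih _ (deltaDeg p d hp)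


theorem unitSub1 {R : Type*} [CommRing R] (L : Rˣ)
    (hL : ∀ i : ℕ, 0 < i → IsUnit ((L : R) ^ i - 1)) :
    ∀ k : ℤ, k ≠ 0 → IsUnit (((L ^ k : Rˣ) : R) - 1) := by
  have hpos : ∀ k : ℤ, 0 < k → IsUnit (((L ^ k : Rˣ) : R) - 1) := by
    intro k hk
    have h1 : (L ^ k : Rˣ) = L ^ k.toNat := by
      rw [← zpow_natCast, Int.toNat_of_nonneg hk.le]
    rw [h1, Units.val_pow_eq_pow_val]
    exact hL k.toNat (by omega)
  intro k hk
  rcases lt_trichotomy k 0 with h | h | h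
  · have key : ((L ^ k : Rˣ) : R) - 1 =
        (-((L ^ k : Rˣ) : R)) * (((L ^ (-k) : Rˣ) : R) - 1) := by
      have : ((L ^ k : Rˣ) : R) * ((L ^ (-k) : Rˣ) : R) = 1 := by
        rw [← Units.val_mul, ← _root_.zpow_add, add_neg_cancel, zpow_zero, Units.val_one]
      rw [neg_mul, mul_sub, mul_one, this, neg_sub]
    rw [key]
    exact ((L ^ k).isUnit.neg).mul (hpos (-k) (by omega))
  · exact absurd h hk
  · exact hpos k h

theorem unitSub {R : Type*} [CommRing R] (L : Rˣ)
    (hL : ∀ i : ℕ, 0 < i → IsUnit ((L : R) ^ i - 1)) :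
    ∀ β γ : ℤ, β ≠ γ → IsUnit (((L ^ β : Rˣ) : R) - ((L ^ γ : Rˣ) : R)) := by
  intro β γ hne
  have key : ((L ^ β : Rˣ) : R) - ((L ^ γ : Rˣ) : R) =
      ((L ^ γ : Rˣ) : R) * (((L ^ (β - γ) : Rˣ) : R) - 1) := by
    rw [mul_sub, mul_one, ← Units.val_mul, ← _root_.zpow_add]
    congr 2
    ring
  rw [key]
  exact (L ^ γ).isUnit.mul (unitSub1 L hL (β - γ) (by omega))

/-- Univariate polynomial-exponential vanishing lemma. -/
theorem lemB {R : Type*} [CommRing R]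
    (htf : ∀ (N : ℤ) (x : R), N ≠ 0 → N • x = 0 → x = 0) (L : Rˣ)
    (hd : ∀ β γ : ℤ, β ≠ γ → IsUnit (((L ^ β : Rˣ) : R) - ((L ^ γ : Rˣ) : R))) :
    ∀ B : Finset ℤ, ∀ P : ℤ → R[X],
      (∀ m : ℕ, ∑ β ∈ B, (P β).eval (m : R) * ((L ^ β : Rˣ) : R) ^ m = 0) →
      ∀ β ∈ B, P β = 0 := by
  intro B
  induction B using Finset.strongInduction with
  | _ B ih =>
  intro P hP
  by_cases hB : B = ∅
  · subst hB; simp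
  obtain ⟨γ, hγ⟩ := Finset.nonempty_iff_ne_empty.2 hB
  set lam : ℤ → R := fun β => ((L ^ β : Rˣ) : R) with hlam
  set T : ℤ → R[X] → R[X] :=
    fun β Q => lam β • taylor 1 Q - lam γ • Q with hT
  -- one difference step preserves the vanishing hypothesis
  have step : ∀ Q : ℤ → R[X],
      (∀ m : ℕ, ∑ β ∈ B, (Q β).eval (m : R) * lam β ^ m = 0) →
      (∀ m : ℕ, ∑ β ∈ B, (T β (Q β)).eval (m : R) * lam β ^ m = 0) := by
    intro Q hQ m
    have e1 : ∀ β, (T β (Q β)).eval (m : R) =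
        lam β * (Q β).eval (((m + 1 : ℕ) : R)) - lam γ * (Q β).eval (m : R) := by
      intro β
      rw [hT]
      simp only [eval_sub, eval_smul, smul_eq_mul, taylor_eval]
      push_cast
      ring_nf
    calc ∑ β ∈ B, (T β (Q β)).eval (m : R) * lam β ^ m
        = ∑ β ∈ B, ((Q β).eval (((m + 1 : ℕ) : R)) * lam β ^ (m + 1)
            - lam γ * ((Q β).eval (m : R) * lam β ^ m)) := by
          apply Finset.sum_congr rfl
          intro β _
          rw [e1, pow_succ]
          ring
      _ = (∑ β ∈ B, (Q β).eval (((m + 1 : ℕ) : R)) * lam β ^ (m + 1))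
            - lam γ * ∑ β ∈ B, (Q β).eval (m : R) * lam β ^ m := by
          rw [Finset.sum_sub_distrib, Finset.mul_sum]
      _ = 0 := by rw [hQ (m + 1), hQ m, mul_zero, sub_zero]
  -- iterate
  set k := (P γ).natDegree + 1 with hk
  set P' : ℤ → R[X] := fun β => (T β)^[k] (P β) with hP'def
  have hIter : ∀ j : ℕ, ∀ m : ℕ,
      ∑ β ∈ B, ((T β)^[j] (P β)).eval (m : R) * lam β ^ m = 0 := by
    intro j
    induction j with
    | zero => simpa using hP
    | succ j ihj =>
      have := step (fun β => (T β)^[j] (P β)) ihj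
      intro m
      simpa [Function.iterate_succ_apply'] using this m
  have hP' : ∀ m : ℕ, ∑ β ∈ B, (P' β).eval (m : R) * lam β ^ m = 0 := hIter k
  -- the γ-component dies
  have hTγ : ∀ Q : R[X], T γ Q = lam γ • (taylor 1 Q - Q) := by
    intro Q; rw [hT]; rw [smul_sub]
  have hγiter : ∀ j : ℕ, ∀ Q : R[X],
      (T γ)^[j] Q = lam γ ^ j • (fun q : R[X] => taylor 1 q - q)^[j] Q := by
    intro j
    induction j with
    | zero => intro Q; simp
    | succ j ihj =>
      intro Q
      rw [Function.iterate_succ_apply', ihj, Function.iterate_succ_apply', hTγ,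
        pow_succ, _root_.map_smul, ← smul_sub, smul_smul, mul_comm]
  have hP'γ : P' γ = 0 := by
    rw [hP'def]
    simp only
    rw [hγiter k (P γ), hk, deltaNilp ((P γ).natDegree) (P γ) le_rfl, smul_zero]
  -- apply induction hypothesis on B.erase γ
  have hrest : ∀ β ∈ B.erase γ, P' β = 0 := by
    apply ih (B.erase γ) (Finset.erase_ssubset hγ)
    intro m
    rw [Finset.sum_erase _ (by rw [hP'γ]; simp)]
    exact hP' m
  -- injectivity of T β for β ≠ γ
  have hTinj : ∀ β : ℤ, β ≠ γ → ∀ Q : R[X], T β Q = 0 → Q = 0 := by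
    intro β hβ Q hQ
    by_contra h0
    have hcoeff : (T β Q).coeff Q.natDegree = (lam β - lam γ) * Q.leadingCoeff := by
      rw [hT]
      simp only [coeff_sub, coeff_smul, smul_eq_mul]
      rw [taylorCoeffTop Q Q.natDegree le_rfl]
      rw [Polynomial.leadingCoeff]
      ring
    rw [hQ, Polynomial.coeff_zero] at hcoeff
    have hu := hd β γ hβ
    have : Q.leadingCoeff = 0 := by
      rcases hu with ⟨u, hu⟩
      have : (u : R) * Q.leadingCoeff = 0 := by rw [hu]; exact hcoeff.symm
      calc Q.leadingCoeff = (u⁻¹ : Rˣ) * ((u : R) * Q.leadingCoeff) := by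
            rw [← mul_assoc, Units.inv_mul, one_mul]
        _ = 0 := by rw [this, mul_zero]
    exact h0 (Polynomial.leadingCoeff_eq_zero.mp this)
  have hTinjIter : ∀ β : ℤ, β ≠ γ → ∀ j : ℕ, ∀ Q : R[X], (T β)^[j] Q = 0 → Q = 0 := by
    intro β hβ j
    induction j with
    | zero => intro Q hQ; simpa using hQ
    | succ j ihj =>
      intro Q hQ
      rw [Function.iterate_succ_apply] at hQ
      exact hTinj β hβ _ (ihj _ hQ)
  -- conclude for β ≠ γ
  have hne : ∀ β ∈ B, β ≠ γ → P β = 0 := by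
    intro β hβ hβγ
    exact hTinjIter β hβγ k (P β) (hrest β (Finset.mem_erase.2 ⟨hβγ, hβ⟩))
  -- conclude for γ
  have hγ0 : P γ = 0 := by
    apply polyA htf
    intro m
    have hsum := hP' -- not needed; use hP directly
    have h1 : ∑ β ∈ B, (P β).eval (m : R) * lam β ^ m = (P γ).eval (m : R) * lam γ ^ m := by
      apply Finset.sum_eq_single_of_mem γ hγ
      intro b hb hbne
      rw [hne b hb hbne]
      simp
    rw [hP m] at h1
    have hu : IsUnit (lam γ ^ m) := by
      rw [hlam]
      simp only
      rw [← Units.val_pow_eq_pow_val]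
      exact (((L ^ γ)) ^ m).isUnit
    rcases hu with ⟨u, hu⟩
    have : (P γ).eval (m : R) * (u : R) = 0 := by rw [hu]; exact h1.symm
    calc (P γ).eval (m : R) = ((P γ).eval (m : R) * (u : R)) * (u⁻¹ : Rˣ) := by
          rw [mul_assoc, Units.mul_inv, mul_one]
      _ = 0 := by rw [this, zero_mul]
  intro β hβ
  by_cases hβγ : β = γ
  · rw [hβγ]; exact hγ0
  · exact hne β hβ hβγ

theorem lemC {R : Type*} [CommRing R]
    (htf : ∀ (N : ℤ) (x : R), N ≠ 0 → N • x = 0 → x = 0) (L : Rˣ)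
    (hd : ∀ β γ : ℤ, β ≠ γ → IsUnit (((L ^ β : Rˣ) : R) - ((L ^ γ : Rˣ) : R))) :
    ∀ r : ℕ, ∀ S : Finset ((Fin r → ℕ) × (Fin r → ℤ)), ∀ c : (Fin r → ℕ) × (Fin r → ℤ) → R,
      (∀ n : Fin r → ℕ, ∑ ab ∈ S, c ab * (∏ i, (n i : R) ^ ab.1 i) *
        ((L ^ (∑ i, ab.2 i * (n i : ℤ)) : Rˣ) : R) = 0) →
      ∀ ab ∈ S, c ab = 0 := by
  intro r
  induction r with
  | zero =>
    intro S c h ab hab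
    have hS : S = {ab} := Finset.eq_singleton_iff_unique_mem.2
      ⟨hab, fun x _ => Subsingleton.elim x ab⟩
    have h0 := h ab.1
    rw [hS] at h0
    simpa using h0
  | succ r IH =>
    intro S c h ab hab
    classical
    set lst := Fin.last r with hlst
    -- the coefficient function for a fixed n'
    set coef : (Fin r → ℕ) → ((Fin (r+1) → ℕ) × (Fin (r+1) → ℤ)) → R :=
      fun n' x => c x * (∏ i : Fin r, (n' i : R) ^ x.1 i.castSucc) *
        ((L ^ (∑ i : Fin r, x.2 i.castSucc * (n' i : ℤ)) : Rˣ) : R) with hcoefdef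
    -- Step A : univariate polynomial vanishing for each fiber
    have stepA : ∀ n' : Fin r → ℕ, ∀ β : ℤ,
        (∑ x ∈ S.filter (fun x => x.2 lst = β),
          C (coef n' x) * X ^ (x.1 lst) : R[X]) = 0 := by
      intro n' β
      set B : Finset ℤ := S.image (fun x => x.2 lst) with hB
      set P : ℤ → R[X] := fun b =>
        ∑ x ∈ S.filter (fun x => x.2 lst = b), C (coef n' x) * X ^ (x.1 lst) with hPdef
      by_cases hβB : β ∈ B
      · refine lemB htf L hd B P ?_ β hβB
        intro m
        -- evaluate the polynomials
        have e1 : ∀ b : ℤ, (P b).eval (m : R) =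
            ∑ x ∈ S.filter (fun x => x.2 lst = b), coef n' x * (m : R) ^ (x.1 lst) := by
          intro b
          rw [hPdef]
          simp [Polynomial.eval_finset_sum]
        calc ∑ b ∈ B, (P b).eval (m : R) * ((L ^ b : Rˣ) : R) ^ m
            = ∑ b ∈ B, ∑ x ∈ S.filter (fun x => x.2 lst = b),
                coef n' x * (m : R) ^ (x.1 lst) * ((L ^ (x.2 lst) : Rˣ) : R) ^ m := by
              refine Finset.sum_congr rfl fun b _ => ?_
              rw [e1, Finset.sum_mul]
              refine Finset.sum_congr rfl fun x hx => ?_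
              rw [(Finset.mem_filter.mp hx).2]
          _ = ∑ x ∈ S, coef n' x * (m : R) ^ (x.1 lst) * ((L ^ (x.2 lst) : Rˣ) : R) ^ m :=
              Finset.sum_fiberwise_of_maps_to
                (fun x hx => Finset.mem_image_of_mem _ hx) _
          _ = 0 := by
              rw [← h (Fin.snoc n' m)]
              refine Finset.sum_congr rfl fun x _ => ?_
              -- per-term identity
              set nn : Fin (r+1) → ℕ := Fin.snoc n' m with hnn
              have hprod : (∏ i : Fin (r+1), ((nn i : ℕ) : R) ^ x.1 i) =
                  (∏ i : Fin r, (n' i : R) ^ x.1 i.castSucc) * (m : R) ^ (x.1 lst) := by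
                rw [Fin.prod_univ_castSucc]
                simp [hnn, hlst, Fin.snoc_castSucc, Fin.snoc_last]
              have hexp : (∑ i : Fin (r+1), x.2 i * ((nn i : ℕ) : ℤ)) =
                  (∑ i : Fin r, x.2 i.castSucc * (n' i : ℤ)) + x.2 lst * (m : ℤ) := by
                rw [Fin.sum_univ_castSucc]
                simp [hnn, hlst, Fin.snoc_castSucc, Fin.snoc_last]
              have hunit : ((L ^ ((∑ i : Fin r, x.2 i.castSucc * (n' i : ℤ)) + x.2 lst * (m : ℤ)) : Rˣ) : R)
                  = ((L ^ (∑ i : Fin r, x.2 i.castSucc * (n' i : ℤ)) : Rˣ) : R) *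
                    ((L ^ (x.2 lst) : Rˣ) : R) ^ m := by
                rw [_root_.zpow_add, Units.val_mul]
                congr 1
                rw [_root_.zpow_mul, zpow_natCast, Units.val_pow_eq_pow_val]
              rw [hprod, hexp, hunit, hcoefdef]
              ring
      · have : S.filter (fun x => x.2 lst = β) = ∅ := by
          rw [Finset.filter_eq_empty_iff]
          intro x hx hc
          exact hβB (hB ▸ (hc ▸ Finset.mem_image_of_mem _ hx))
        rw [this, Finset.sum_empty]
    -- Step B : extract the coefficient in degree α
    set α := ab.1 lst with hα
    set β := ab.2 lst with hβ
    set S₀ := (S.filter (fun x => x.2 lst = β)).filter (fun x => α = x.1 lst) with hS₀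
    have hab₀ : ab ∈ S₀ := by
      rw [hS₀]
      exact Finset.mem_filter.2 ⟨Finset.mem_filter.2 ⟨hab, rfl⟩, rfl⟩
    have stepB : ∀ n' : Fin r → ℕ, ∑ x ∈ S₀, coef n' x = 0 := by
      intro n'
      have h0 := congrArg (fun p : R[X] => p.coeff α) (stepA n' β)
      simp only [Polynomial.coeff_zero] at h0
      rw [Polynomial.finset_sum_coeff] at h0
      have h1 : ∀ x ∈ S.filter (fun x => x.2 lst = β),
          (C (coef n' x) * X ^ (x.1 lst)).coeff α = if α = x.1 lst then coef n' x else 0 := by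
        intro x _
        rw [Polynomial.coeff_C_mul, Polynomial.coeff_X_pow, mul_ite, mul_one, mul_zero]
      rw [Finset.sum_congr rfl h1, ← Finset.sum_filter] at h0
      exact h0
    -- Step C : transfer to Fin r and apply the induction hypothesis
    set res : ((Fin (r+1) → ℕ) × (Fin (r+1) → ℤ)) → ((Fin r → ℕ) × (Fin r → ℤ)) :=
      fun x => (Fin.init x.1, Fin.init x.2) with hres
    set sn : ((Fin r → ℕ) × (Fin r → ℤ)) → ((Fin (r+1) → ℕ) × (Fin (r+1) → ℤ)) :=
      fun y => ((Fin.snoc y.1 α : Fin (r+1) → ℕ), (Fin.snoc y.2 β : Fin (r+1) → ℤ)) with hsn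
    have hfix : ∀ x ∈ S₀, sn (res x) = x := by
      intro x hx
      obtain ⟨hx1, hx2⟩ := Finset.mem_filter.mp hx
      obtain ⟨_, hx3⟩ := Finset.mem_filter.mp hx1
      have e1 : (Fin.snoc (Fin.init x.1) α : Fin (r+1) → ℕ) = x.1 := by
        rw [hx2]; exact Fin.snoc_init_self x.1
      have e2 : (Fin.snoc (Fin.init x.2) β : Fin (r+1) → ℤ) = x.2 := by
        rw [← hx3]; exact Fin.snoc_init_self x.2
      rw [hsn, hres]
      simp only
      rw [e1, e2]
    have hinj : Set.InjOn res S₀ := by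
      intro x hx y hy hxy
      have := congrArg sn hxy
      rw [hfix x hx, hfix y hy] at this
      exact this
    set c' : (Fin r → ℕ) × (Fin r → ℤ) → R := fun y => c (sn y) with hc'
    have hIHhyp : ∀ n' : Fin r → ℕ,
        ∑ y ∈ S₀.image res, c' y * (∏ i, (n' i : R) ^ y.1 i) *
          ((L ^ (∑ i, y.2 i * (n' i : ℤ)) : Rˣ) : R) = 0 := by
      intro n'
      rw [Finset.sum_image (fun x hx y hy hxy => hinj hx hy hxy)]
      rw [← stepB n']
      refine Finset.sum_congr rfl fun x hx => ?_
      have hcx : c' (res x) = c x := by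
        rw [hc']
        show c (sn (res x)) = c x
        rw [hfix x hx]
      rw [hcx, hcoefdef, hres]
      simp only [Fin.init_def]
    have := IH (S₀.image res) c' hIHhyp (res ab) (Finset.mem_image_of_mem _ hab₀)
    rw [hc'] at this
    have this2 : c (sn (res ab)) = 0 := this
    rw [hfix ab hab₀] at this2
    exact this2


/-- Torsion-free case of the corrected Proposition 4.1: over a commutative ring with
torsion-free additive group, pointwise vanishing of the polynomial-exponential sum on
`ℕ^r` forces all coefficients to vanish. -/
theorem stmt10 {R : Type*} [CommRing R]
    (htf : ∀ (N : ℤ) (x : R), N ≠ 0 → N • x = 0 → x = 0)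
    (r : ℕ) (hr : 0 < r) (L : Rˣ)
    (hL : ∀ i : ℕ, 0 < i → IsUnit ((L : R) ^ i - 1))
    (S : Finset ((Fin r → ℕ) × (Fin r → ℤ))) (c : (Fin r → ℕ) × (Fin r → ℤ) → R)
    (hf : ∀ n : Fin r → ℕ,
      ∑ ab ∈ S, c ab * (∏ i, (n i : R) ^ ab.1 i) *
        ((L ^ (∑ i, ab.2 i * (n i : ℤ)) : Rˣ) : R) = 0) :
    ∀ ab ∈ S, c ab = 0 :=
  lemC htf L (unitSub L hL) r S c hf
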